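/- Suppose a = 0 and f ≠ 0, and let X = X(0,b,c,d,e,f). If b²+cf = 0 and bc+df = 0, then rank X² = 0. If not both b²+cf and bc+df vanish, then rank X² = 1 if (bc+df)² − 4(b²+cf)(c²−bd) = 0, and rank X² = 2 otherwise. -/

import Mathlib

set_option maxHeartbeats 2000000

/-- The image of the general nilpotent element
`a·e_{α₁} + b·e_{α₁+α₂} + c·e_{2α₁+α₂} + d·e_{3α₁+α₂} + e·e_{3α₁+2α₂} + f·e_{α₂}`
of the Lie algebra `g₂` over `F` in its faithful 7-dimensional representation. -/
noncomputable def g2X {F : Type*} [Field F] (a b c d e f : F) :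
    Matrix (Fin 7) (Fin 7) F :=
  !![0, a, b, 2*c, d, e, 0;
     0, 0, f, -2*b, -c, 0, e;
     0, 0, 0, 2*a, 0, -c, -d;
     0, 0, 0, 0, a, b, c;
     0, 0, 0, 0, 0, f, -b;
     0, 0, 0, 0, 0, 0, a;
     0, 0, 0, 0, 0, 0, 0]

@[simp] lemma my_cons_val_five {α : Type*} (x : α) (u : Fin 6 → α) :
    Matrix.vecCons x u 5 = u 4 := rfl
@[simp] lemma my_cons_val_six {α : Type*} (x : α) (u : Fin 6 → α) :
    Matrix.vecCons x u 6 = u 5 := rfl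
@[simp] lemma my_cons_val_five' {α : Type*} (x : α) (u : Fin 5 → α) :
    Matrix.vecCons x u 5 = u 4 := rfl

/-- The shape of `X(0,b,c,d,e,f)²`: only a 2×2 block is nonzero. -/
def g2M {F : Type*} [Field F] (P Q R : F) : Matrix (Fin 7) (Fin 7) F :=
  !![0, 0, 0, 0, 0, P, 2*R;
     0, 0, 0, 0, 0, -2*Q, -P;
     0, 0, 0, 0, 0, 0, 0;
     0, 0, 0, 0, 0, 0, 0;
     0, 0, 0, 0, 0, 0, 0;
     0, 0, 0, 0, 0, 0, 0;
     0, 0, 0, 0, 0, 0, 0]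

lemma g2X_sq {F : Type*} [Field F] (b c d e f : F) :
    (g2X 0 b c d e f) ^ 2 = g2M (b*c + d*f) (b^2 + c*f) (c^2 - b*d) := by
  rw [pow_two]
  ext i j
  fin_cases i <;> fin_cases j <;>
    simp [g2X, g2M, Matrix.mul_apply, Fin.sum_univ_seven, Matrix.vecHead,
      Matrix.vecTail] <;> ring

lemma rank_ge_of_unit {F : Type*} [Field F] {k : ℕ} (Y : Matrix (Fin 7) (Fin 7) F)
    (S : Matrix (Fin k) (Fin 7) F) (T : Matrix (Fin 7) (Fin k) F)
    (h : IsUnit (S * Y * T).det) : k ≤ Y.rank := by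
  have h1 : (S * Y * T).rank = k := by
    rw [Matrix.rank_of_isUnit _ ((Matrix.isUnit_iff_isUnit_det _).mpr h), Fintype.card_fin]
  calc k = (S * Y * T).rank := h1.symm
    _ = (S * (Y * T)).rank := by rw [Matrix.mul_assoc]
    _ ≤ (Y * T).rank := Matrix.rank_mul_le_right _ _
    _ ≤ Y.rank := Matrix.rank_mul_le_left _ _

lemma g2M_rank_le_two {F : Type*} [Field F] (P Q R : F) : (g2M P Q R).rank ≤ 2 := by
  have hfac : g2M P Q R =
      (!![P, 2*R; -2*Q, -P; 0,0; 0,0; 0,0; 0,0; 0,0] : Matrix (Fin 7) (Fin 2) F) *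
      (!![0,0,0,0,0,1,0; 0,0,0,0,0,0,1] : Matrix (Fin 2) (Fin 7) F) := by
    ext i j
    fin_cases i <;> fin_cases j <;>
      simp [g2M, Matrix.mul_apply, Fin.sum_univ_two, Matrix.vecHead, Matrix.vecTail]
  calc (g2M P Q R).rank ≤ _ := hfac ▸ Matrix.rank_mul_le_left _ _
    _ ≤ Fintype.card (Fin 2) := Matrix.rank_le_card_width _
    _ = 2 := Fintype.card_fin 2

/-- Let `a = 0` and `f ≠ 0`, `X = X(0,b,c,d,e,f)`. If `b²+cf = 0` and `bc+df = 0`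
then `rank X² = 0`. If not both vanish, then `rank X² = 1` when
`(bc+df)² − 4(b²+cf)(c²−bd) = 0` and `rank X² = 2` otherwise. -/
theorem g2_case2_rank_X_sq (F : Type*) [Field F] [Fintype F] (hchar : 3 < ringChar F)
    (b c d e f : F) (hf : f ≠ 0) :
    (b ^ 2 + c * f = 0 ∧ b * c + d * f = 0 → ((g2X 0 b c d e f) ^ 2).rank = 0) ∧
    (¬(b ^ 2 + c * f = 0 ∧ b * c + d * f = 0) →
      ((b * c + d * f) ^ 2 - 4 * (b ^ 2 + c * f) * (c ^ 2 - b * d) = 0 →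
        ((g2X 0 b c d e f) ^ 2).rank = 1) ∧
      ((b * c + d * f) ^ 2 - 4 * (b ^ 2 + c * f) * (c ^ 2 - b * d) ≠ 0 →
        ((g2X 0 b c d e f) ^ 2).rank = 2)) := by
  have h2 : (2 : F) ≠ 0 := by
    intro h
    have : ringChar F ∣ 2 := ringChar.dvd (by exact_mod_cast h)
    have := Nat.le_of_dvd (by norm_num) this
    omega
  rw [g2X_sq]
  refine ⟨?_, ?_⟩
  · rintro ⟨hQ0, hP0⟩
    have hR0 : c^2 - b*d = 0 := by
      have h3 : f * (c^2 - b*d) = 0 := by linear_combination c * hQ0 - b * hP0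
      exact (mul_eq_zero.mp h3).resolve_left hf
    have hz : g2M (b*c + d*f) (b^2 + c*f) (c^2 - b*d) = 0 := by
      rw [hP0, hQ0, hR0]
      ext i j
      fin_cases i <;> fin_cases j <;>
        simp [g2M, Matrix.vecHead, Matrix.vecTail]
    rw [hz, Matrix.rank_zero]
  · intro hne
    constructor
    · intro hdisc
      have hQ0 : b^2 + c*f ≠ 0 := by
        intro h0
        apply hne
        have hP2 : (b*c + d*f) ^ 2 = 0 := by
          linear_combination hdisc + (4 * (c^2 - b*d)) * h0
        exact ⟨h0, pow_eq_zero_iff (n := 2) (by norm_num) |>.mp hP2⟩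
      have hle : (g2M (b*c + d*f) (b^2 + c*f) (c^2 - b*d)).rank ≤ 1 := by
        have hfac : g2M (b*c + d*f) (b^2 + c*f) (c^2 - b*d) =
            (!![b*c + d*f; -2*(b^2 + c*f); 0; 0; 0; 0; 0] : Matrix (Fin 7) (Fin 1) F) *
            (!![0,0,0,0,0,1,(b*c + d*f)/(2*(b^2 + c*f))] : Matrix (Fin 1) (Fin 7) F) := by
          ext i j
          fin_cases i <;> fin_cases j <;>
            simp [g2M, Matrix.mul_apply, Fin.sum_univ_one, Matrix.vecHead, Matrix.vecTail] <;>
            field_simp <;>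
            first
              | ring1
              | linear_combination hdisc
              | linear_combination -hdisc
              | linear_combination 2*hdisc
              | linear_combination -2*hdisc
              | (rw [mul_div_cancel_left₀ _ (by rwa [mul_comm f c])]; ring)
        calc (g2M (b*c + d*f) (b^2 + c*f) (c^2 - b*d)).rank
            ≤ _ := hfac ▸ Matrix.rank_mul_le_left _ _
          _ ≤ Fintype.card (Fin 1) := Matrix.rank_le_card_width _
          _ = 1 := Fintype.card_fin 1
      have hge : 1 ≤ (g2M (b*c + d*f) (b^2 + c*f) (c^2 - b*d)).rank := by
        apply rank_ge_of_unit _ (!![0,1,0,0,0,0,0]) ((!![0;0;0;0;0;1;0] : Matrix (Fin 7) (Fin 1) F))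
        have hB : (!![0,1,0,0,0,0,0] : Matrix (Fin 1) (Fin 7) F) *
            g2M (b*c + d*f) (b^2 + c*f) (c^2 - b*d) *
            ((!![0;0;0;0;0;1;0] : Matrix (Fin 7) (Fin 1) F)) = !![-2*(b^2 + c*f)] := by
          ext i j
          fin_cases i <;> fin_cases j <;>
            simp [g2M, Matrix.mul_apply, Fin.sum_univ_seven, Matrix.vecHead,
              Matrix.vecTail] <;> ring
        rw [hB, Matrix.det_fin_one_of]
        exact isUnit_iff_ne_zero.mpr (by
          simpa using mul_ne_zero (neg_ne_zero.mpr h2) hQ0)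
      omega
    · intro hdisc
      have hle := g2M_rank_le_two (b*c + d*f) (b^2 + c*f) (c^2 - b*d)
      have hge : 2 ≤ (g2M (b*c + d*f) (b^2 + c*f) (c^2 - b*d)).rank := by
        apply rank_ge_of_unit _ (!![1,0,0,0,0,0,0; 0,1,0,0,0,0,0])
          ((!![0,0; 0,0; 0,0; 0,0; 0,0; 1,0; 0,1] : Matrix (Fin 7) (Fin 2) F))
        have hB : (!![1,0,0,0,0,0,0; 0,1,0,0,0,0,0] : Matrix (Fin 2) (Fin 7) F) *
            g2M (b*c + d*f) (b^2 + c*f) (c^2 - b*d) *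
            ((!![0,0; 0,0; 0,0; 0,0; 0,0; 1,0; 0,1] : Matrix (Fin 7) (Fin 2) F)) =
            !![b*c + d*f, 2*(c^2 - b*d); -2*(b^2 + c*f), -(b*c + d*f)] := by
          ext i j
          fin_cases i <;> fin_cases j <;>
            simp [g2M, Matrix.mul_apply, Fin.sum_univ_seven, Matrix.vecHead,
              Matrix.vecTail] <;> ring
        rw [hB, Matrix.det_fin_two_of]
        apply isUnit_iff_ne_zero.mpr
        intro h0
        apply hdisc
        linear_combination -h0
      omega
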